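/- Let Δ ⊂ ℝⁿ be a compact convex polytope with 0 in its interior, let l be its Ricci affine function, and let B ∈ L²(Δ) be convex on Δ°, satisfying B ≥ 0, ∫_Δ B h dy = h(0) for all affine h (so I_B(h) = 0), and ∫_Δ B² = B(0). Set g₀ = B - |Δ|^{-1}. Then for every nonzero convex g ∈ L²(Δ), -I(g)/‖g‖₂ ≤ ‖|Δ|^{-1} - B‖₂, where I(g) = -g(0) + |Δ|^{-1}∫_Δ g dy, and equality holds for g = g₀ (when B ≠ |Δ|^{-1}). Hence sup over nonzero convex g of -I(g)/‖g‖₂ equals ‖|Δ|^{-1} - B‖₂. -/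

import Mathlib

open MeasureTheory

lemma exists_subgradient {n : ℕ} (Δ : Set (Fin n → ℝ)) (hΔconv : Convex ℝ Δ)
    (h0 : (0 : Fin n → ℝ) ∈ interior Δ) (g : (Fin n → ℝ) → ℝ)
    (hg : ConvexOn ℝ Δ g) :
    ∃ a : Fin n → ℝ, ∀ y ∈ interior Δ, g 0 + ∑ i, a i * y i ≤ g y := by
  classical
  set U : Set ((Fin n → ℝ) × ℝ) := {p | p.1 ∈ interior Δ ∧ g p.1 < p.2} with hU
  have hgi : ConvexOn ℝ (interior Δ) g :=
    hg.subset interior_subset (hΔconv.interior)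
  have hUconv : Convex ℝ U := by
    rintro ⟨p1, p2⟩ ⟨hp1, hp2⟩ ⟨q1, q2⟩ ⟨hq1, hq2⟩ s t hs ht hst
    refine ⟨hΔconv.interior hp1 hq1 hs ht hst, ?_⟩
    have hle := hgi.2 hp1 hq1 hs ht hst
    rcases eq_or_lt_of_le hs with hs0 | hs0
    · have ht1 : t = 1 := by linarith
      simp only [← hs0, ht1, zero_smul, one_smul, zero_add] at *
      exact lt_of_le_of_lt hle (by simpa using hq2)
    · have h1 : s * g p1 < s * p2 := (mul_lt_mul_iff_right₀ hs0).2 hp2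
      have h2 : t * g q1 ≤ t * q2 := mul_le_mul_of_nonneg_left (le_of_lt hq2) ht
      calc g (s • p1 + t • q1) ≤ s * g p1 + t * g q1 := by simpa using hle
        _ < s * p2 + t * q2 := by linarith
        _ = (s • ((p1, p2) : (Fin n → ℝ) × ℝ) + t • (q1, q2)).2 := by simp
  have hUopen : IsOpen U := by
    have hc : ContinuousOn (fun p : (Fin n → ℝ) × ℝ => p.2 - g p.1)
        (interior Δ ×ˢ (Set.univ : Set ℝ)) := by
      apply ContinuousOn.sub
      · exact continuous_snd.continuousOn
      · exact hg.continuousOn_interior.comp continuous_fst.continuousOn (fun p hp => hp.1)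
    have h2 := hc.isOpen_inter_preimage (isOpen_interior.prod isOpen_univ) (isOpen_Ioi (a := (0:ℝ)))
    convert h2 using 1
    ext ⟨p1, p2⟩
    simp only [hU, Set.mem_setOf_eq, Set.mem_inter_iff, Set.mem_prod, Set.mem_univ, and_true,
      Set.mem_preimage, Set.mem_Ioi, sub_pos]
  have hx : ((0 : Fin n → ℝ), g 0) ∉ U := by simp [hU]
  obtain ⟨F, hF⟩ := geometric_hahn_banach_open_point hUconv hUopen hx
  set b : ℝ := F ((0 : Fin n → ℝ), (1 : ℝ)) with hbdef
  have hdec : ∀ (y : Fin n → ℝ) (t : ℝ), F (y, t) = F (y, 0) + t * b := by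
    intro y t
    have h3 : ((y, t) : (Fin n → ℝ) × ℝ) = (y, (0 : ℝ)) + t • ((0 : Fin n → ℝ), (1 : ℝ)) := by
      simp [Prod.ext_iff]
    rw [h3, map_add, F.map_smul, smul_eq_mul]
  have hF00 : F ((0 : Fin n → ℝ), (0 : ℝ)) = 0 := map_zero F
  have hF' : ∀ y ∈ interior Δ, ∀ t, g y < t →
      F (y, 0) + t * b < g 0 * b := by
    intro y hy t ht
    have h4 := hF (y, t) ⟨hy, ht⟩
    rw [hdec y t, hdec 0 (g 0), hF00, zero_add] at h4
    exact h4
  have hb : b < 0 := by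
    have h5 := hF' 0 h0 (g 0 + 1) (by linarith)
    rw [hF00, zero_add] at h5
    nlinarith
  have hc : (0:ℝ) < -b := neg_pos.2 hb
  have key : ∀ y ∈ interior Δ, F (y, 0) + g y * b ≤ g 0 * b := by
    intro y hy
    by_contra hcon
    push_neg at hcon
    set δ : ℝ := F (y, 0) + g y * b - g 0 * b with hδ
    have hδpos : 0 < δ := by linarith
    have hblt := hF' y hy (g y + δ / (2 * (-b)))
      (by have : 0 < δ / (2 * (-b)) := by positivity
          linarith)
    have h2b : (2 * -b) ≠ 0 := by positivity
    have hmul : δ / (2 * -b) * b = -δ / 2 := by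
      rw [div_mul_eq_mul_div, div_eq_div_iff h2b (by norm_num : (2:ℝ) ≠ 0)]
      ring
    nlinarith
  refine ⟨fun i => F (Pi.single i 1, 0) / (-b), fun y hy => ?_⟩
  have hysum : ((y, (0:ℝ)) : (Fin n → ℝ) × ℝ)
      = ∑ i, y i • ((Pi.single i 1 : Fin n → ℝ), (0 : ℝ)) := by
    have h1 : ∑ i, y i • (Pi.single i 1 : Fin n → ℝ) = y := by
      rw [Finset.sum_congr rfl (fun i _ => by
        rw [← Pi.single_smul, smul_eq_mul, mul_one]), Finset.univ_sum_single]
    rw [Prod.ext_iff]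
    constructor
    · rw [Prod.fst_sum]
      simp only [Prod.smul_fst]
      exact h1.symm
    · rw [Prod.snd_sum]
      simp
  have hFsum : F (y, 0) = ∑ i, y i * F (Pi.single i 1, 0) := by
    rw [hysum, map_sum]
    exact Finset.sum_congr rfl (fun i _ => by rw [F.map_smul, smul_eq_mul])
  have hsum : ∑ i, (F (Pi.single i 1, 0) / (-b)) * y i = F (y, 0) / (-b) := by
    rw [hFsum, Finset.sum_div]
    exact Finset.sum_congr rfl (fun i _ => by ring)
  rw [hsum]
  have hkey := key y hy
  have hdiv : F (y, 0) / (-b) ≤ g y - g 0 := by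
    rw [div_le_iff₀ hc]
    nlinarith
  linarith

/-- The optimal destabilizer achieves the supremum of `-I(g)/‖g‖₂`:
for every convex `g ∈ L²(Δ)`, `-I(g) = g(0) - |Δ|⁻¹∫_Δ g ≤ ‖g‖₂ · ‖|Δ|⁻¹ - B‖₂`,
where `I(g) = -g(0) + |Δ|⁻¹ ∫_Δ g`, and equality holds for `g₀ = B - |Δ|⁻¹`;
hence the supremum of `-I(g)/‖g‖₂` over nonzero convex `g` is `‖|Δ|⁻¹ - B‖₂`. -/
theorem optimal_destabilizer_sup {n : ℕ} (Δ : Set (Fin n → ℝ))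
    (hΔc : IsCompact Δ) (hΔconv : Convex ℝ Δ)
    (h0 : (0 : Fin n → ℝ) ∈ interior Δ)
    (B : (Fin n → ℝ) → ℝ)
    (hBconv : ConvexOn ℝ (interior Δ) B) (hBcont : ContinuousOn B Δ)
    (hBpos : ∀ y ∈ Δ, 0 ≤ B y)
    (hBaff : ∀ a : Fin n → ℝ, ∀ c : ℝ,
      ∫ y in Δ, ((∑ i, a i * y i) + c) * B y = c)
    (hBsq : ∫ y in Δ, (B y) ^ 2 = B 0) :
    (∀ g : (Fin n → ℝ) → ℝ, ConvexOn ℝ Δ g → IntegrableOn g Δ →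
      IntegrableOn (fun y => (g y) ^ 2) Δ →
      g 0 - (volume Δ).toReal⁻¹ * (∫ y in Δ, g y) ≤
        Real.sqrt (∫ y in Δ, (g y) ^ 2) *
          Real.sqrt (∫ y in Δ, ((volume Δ).toReal⁻¹ - B y) ^ 2)) ∧
    ((B ≠ fun _ => (volume Δ).toReal⁻¹) →
      (B 0 - (volume Δ).toReal⁻¹) -
          (volume Δ).toReal⁻¹ * (∫ y in Δ, (B y - (volume Δ).toReal⁻¹)) =
        Real.sqrt (∫ y in Δ, (B y - (volume Δ).toReal⁻¹) ^ 2) *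
          Real.sqrt (∫ y in Δ, ((volume Δ).toReal⁻¹ - B y) ^ 2)) := by
  have hmeas : MeasurableSet Δ := hΔc.isClosed.measurableSet
  have hfin : volume Δ < ⊤ := hΔc.measure_lt_top
  set V : ℝ := (volume Δ).toReal with hVdef
  have hVpos : 0 < V := by
    refine ENNReal.toReal_pos ?_ hfin.ne
    refine fun hz => ?_
    have h1 : volume (interior Δ) = 0 :=
      le_antisymm (le_trans (measure_mono interior_subset) hz.le) zero_le
    exact (isOpen_interior.measure_pos volume ⟨0, h0⟩).ne' h1
  have hBmeas : AEStronglyMeasurable B (volume.restrict Δ) :=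
    hBcont.aestronglyMeasurable hmeas
  have hBint : IntegrableOn B Δ := hBcont.integrableOn_compact hΔc
  have hB1 : ∫ y in Δ, B y = 1 := by
    have := hBaff 0 1
    simpa using this
  -- a.e. point of Δ is interior
  have hnull : volume (Δ \ interior Δ) = 0 := by
    rw [← hΔc.isClosed.frontier_eq]
    exact hΔconv.addHaar_frontier volume
  have hae_int : ∀ᵐ y ∂(volume.restrict Δ), y ∈ interior Δ := by
    have h2 : (volume.restrict Δ) (Δ \ interior Δ) = 0 :=
      le_antisymm (le_trans (Measure.restrict_le_self _) hnull.le) zero_le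
    have hnm : ∀ᵐ y ∂(volume.restrict Δ), y ∉ Δ \ interior Δ :=
      (measure_eq_zero_iff_ae_notMem (μ := volume.restrict Δ)).mp h2
    filter_upwards [ae_restrict_mem hmeas, hnm] with y hy1 hy2
    by_contra hnot
    exact hy2 ⟨hy1, hnot⟩
  -- boundedness of B
  obtain ⟨C, hC⟩ := hΔc.exists_bound_of_continuousOn hBcont
  have hBbd : ∀ᵐ y ∂(volume.restrict Δ), ‖B y‖ ≤ C := by
    filter_upwards [ae_restrict_mem hmeas] with y hy using hC y hy
  have hgBint : ∀ g : (Fin n → ℝ) → ℝ, IntegrableOn g Δ →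
      IntegrableOn (fun y => g y * B y) Δ := by
    intro g hgint
    have h := hgint.bdd_mul hBmeas hBbd
    exact h.congr (Filter.Eventually.of_forall fun y => mul_comm _ _)
  -- Jensen via subgradient
  have hJen : ∀ g : (Fin n → ℝ) → ℝ, ConvexOn ℝ Δ g → IntegrableOn g Δ →
      g 0 ≤ ∫ y in Δ, g y * B y := by
    intro g hgc hgint
    obtain ⟨a, ha⟩ := exists_subgradient Δ hΔconv h0 g hgc
    have hlow_eq : ∫ y in Δ, ((∑ i, a i * y i) + g 0) * B y = g 0 := hBaff a (g 0)
    have haffc : Continuous fun y : Fin n → ℝ => (∑ i, a i * y i) + g 0 := by fun_prop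
    have hlow_int : IntegrableOn (fun y => ((∑ i, a i * y i) + g 0) * B y) Δ :=
      ((haffc.continuousOn).mul hBcont).integrableOn_compact hΔc
    have hmono : ∀ᵐ y ∂(volume.restrict Δ),
        ((∑ i, a i * y i) + g 0) * B y ≤ g y * B y := by
      filter_upwards [ae_restrict_mem hmeas, hae_int] with y hyΔ hyint
      have h3 := ha y hyint
      exact mul_le_mul_of_nonneg_right (by linarith) (hBpos y hyΔ)
    calc g 0 = ∫ y in Δ, ((∑ i, a i * y i) + g 0) * B y := hlow_eq.symm
      _ ≤ ∫ y in Δ, g y * B y := integral_mono_ae hlow_int (hgBint g hgint) hmono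
  have hDcont : ContinuousOn (fun y => V⁻¹ - B y) Δ := continuousOn_const.sub hBcont
  have hDint : IntegrableOn (fun y => V⁻¹ - B y) Δ := hDcont.integrableOn_compact hΔc
  have hDsqint : IntegrableOn (fun y => (V⁻¹ - B y) ^ 2) Δ :=
    (hDcont.pow 2).integrableOn_compact hΔc
  constructor
  · -- Part 1
    intro g hgc hgint hgsqint
    have hJ := hJen g hgc hgint
    have e1 : ∫ y in Δ, g y * (V⁻¹ - B y) = V⁻¹ * (∫ y in Δ, g y) - ∫ y in Δ, g y * B y := by
      calc ∫ y in Δ, g y * (V⁻¹ - B y)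
          = ∫ y in Δ, (V⁻¹ * g y - g y * B y) :=
            integral_congr_ae (Filter.Eventually.of_forall fun y => by ring)
        _ = V⁻¹ * (∫ y in Δ, g y) - ∫ y in Δ, g y * B y := by
            rw [integral_sub (hgint.const_mul _) (hgBint g hgint), integral_const_mul]
    have step1 : g 0 - V⁻¹ * (∫ y in Δ, g y) ≤ - ∫ y in Δ, g y * (V⁻¹ - B y) := by
      rw [e1]; linarith
    have step2 : - ∫ y in Δ, g y * (V⁻¹ - B y) ≤ ∫ y in Δ, ‖g y‖ * ‖V⁻¹ - B y‖ := by
      calc - ∫ y in Δ, g y * (V⁻¹ - B y) ≤ ‖∫ y in Δ, g y * (V⁻¹ - B y)‖ :=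
            neg_le_abs _
        _ ≤ ∫ y in Δ, ‖g y * (V⁻¹ - B y)‖ := norm_integral_le_integral_norm _
        _ = ∫ y in Δ, ‖g y‖ * ‖V⁻¹ - B y‖ := by
            refine integral_congr_ae (Filter.Eventually.of_forall fun y => ?_)
            exact norm_mul _ _
    have hpq : Real.HolderConjugate 2 2 := Real.HolderConjugate.two_two
    have hofr : (ENNReal.ofReal (2:ℝ)) = 2 := by
      rw [ENNReal.ofReal_ofNat]
    have hgmem : MemLp (fun y => ‖g y‖) (ENNReal.ofReal (2:ℝ)) (volume.restrict Δ) := by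
      rw [hofr]
      refine (memLp_two_iff_integrable_sq hgint.aestronglyMeasurable.norm).2 ?_
      exact hgsqint.congr (Filter.Eventually.of_forall fun y => by
        simp [Real.norm_eq_abs, sq_abs])
    have hDmem : MemLp (fun y => ‖V⁻¹ - B y‖) (ENNReal.ofReal (2:ℝ)) (volume.restrict Δ) := by
      rw [hofr]
      refine (memLp_two_iff_integrable_sq hDint.aestronglyMeasurable.norm).2 ?_
      exact hDsqint.congr (Filter.Eventually.of_forall fun y => by
        simp [Real.norm_eq_abs, sq_abs])
    have hholder := integral_mul_le_Lp_mul_Lq_of_nonneg hpq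
      (Filter.Eventually.of_forall fun y => norm_nonneg (g y))
      (Filter.Eventually.of_forall fun y => norm_nonneg (V⁻¹ - B y)) hgmem hDmem
    have hconvp : ∀ x : ℝ, x ^ (2:ℝ) = x ^ (2:ℕ) := fun x => by
      rw [show (2:ℝ) = ((2:ℕ):ℝ) by norm_num, Real.rpow_natCast]
    simp only [hconvp, Real.norm_eq_abs, sq_abs] at hholder
    calc g 0 - V⁻¹ * (∫ y in Δ, g y) ≤ ∫ y in Δ, ‖g y‖ * ‖V⁻¹ - B y‖ :=
          le_trans step1 step2
      _ ≤ _ := by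
          rw [Real.sqrt_eq_rpow, Real.sqrt_eq_rpow]
          exact hholder
  · -- Part 2
    intro _
    have hBsqint : IntegrableOn (fun y => B y ^ 2) Δ :=
      (hBcont.pow 2).integrableOn_compact hΔc
    have hconst : ∀ c : ℝ, ∫ _ in Δ, c = V * c := by
      intro c
      rw [setIntegral_const, smul_eq_mul]; rfl
    have hcint : ∀ c : ℝ, IntegrableOn (fun _ => c) Δ :=
      fun c => integrableOn_const hfin.ne
    have I1 : ∫ y in Δ, (B y - V⁻¹) = 0 := by
      rw [integral_sub hBint (hcint V⁻¹), hB1, hconst, mul_inv_cancel₀ hVpos.ne']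
      ring
    have I2 : ∫ y in Δ, (B y - V⁻¹) ^ 2 = B 0 - V⁻¹ := by
      have e2 : ∫ y in Δ, (B y - V⁻¹) ^ 2
          = ∫ y in Δ, (B y ^ 2 - (2 * V⁻¹) * B y + V⁻¹ ^ 2) :=
        integral_congr_ae (Filter.Eventually.of_forall fun y => by ring)
      have e3 : ∫ y in Δ, (B y ^ 2 - 2 * V⁻¹ * B y + V⁻¹ ^ 2)
          = (∫ y in Δ, (B y ^ 2 - 2 * V⁻¹ * B y)) + ∫ _ in Δ, V⁻¹ ^ 2 :=
        integral_add (hBsqint.sub (hBint.const_mul _)) (hcint _)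
      have e4 : ∫ y in Δ, (B y ^ 2 - 2 * V⁻¹ * B y)
          = (∫ y in Δ, B y ^ 2) - ∫ y in Δ, 2 * V⁻¹ * B y :=
        integral_sub hBsqint (hBint.const_mul _)
      have e5 : ∫ y in Δ, 2 * V⁻¹ * B y = 2 * V⁻¹ * ∫ y in Δ, B y :=
        integral_const_mul _ _
      rw [e2, e3, e4, e5, hBsq, hB1, hconst]
      field_simp
      ring
    have I3 : ∫ y in Δ, (V⁻¹ - B y) ^ 2 = B 0 - V⁻¹ := by
      rw [← I2]
      exact integral_congr_ae (Filter.Eventually.of_forall fun y => by ring)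
    have hge : 0 ≤ B 0 - V⁻¹ := by
      rw [← I2]
      exact setIntegral_nonneg hmeas fun y _ => sq_nonneg _
    rw [I1, I2, I3, mul_zero, sub_zero, Real.mul_self_sqrt hge]
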